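/- Let Ṽ(ρ) = −2(9ρ⁴ + 102ρ² − 335)/(5+3ρ²)², and define f₁(ρ) = (5+3ρ²)⁻² and f₂(ρ) = ρf₁′(ρ) + 2f₁(ρ). Then the pair (f₁, f₂) satisfies the eigenvalue system with λ = 1 on (0,1): ρf₁′(ρ) + 2f₁(ρ) − f₂(ρ) = 0 and −f₁″(ρ) − (6/ρ)f₁′(ρ) + ρf₂′(ρ) + 5f₂(ρ) − Ṽ(ρ)f₁(ρ) = 0 for all ρ ∈ (0,1). -/

import Mathlib

/-- The potential `Ṽ`. -/
noncomputable def Vt (ρ : ℝ) : ℝ :=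
  -2 * (9 * ρ ^ 4 + 102 * ρ ^ 2 - 335) / (5 + 3 * ρ ^ 2) ^ 2

/-- The first component `f₁(ρ) = (5+3ρ²)⁻²` of the `λ = 1` eigenfunction. -/
noncomputable def f1 (ρ : ℝ) : ℝ := ((5 + 3 * ρ ^ 2) ^ 2)⁻¹

/-- The second component `f₂ = ρf₁′ + 2f₁` of the `λ = 1` eigenfunction. -/
noncomputable def f2 (ρ : ℝ) : ℝ := ρ * deriv f1 ρ + 2 * f1 ρ

lemma hpos (ρ : ℝ) : (0:ℝ) < 5 + 3 * ρ ^ 2 := by positivity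

lemma hne (ρ : ℝ) : (5 + 3 * ρ ^ 2 : ℝ) ≠ 0 := (hpos ρ).ne'

lemma hbase (ρ : ℝ) : HasDerivAt (fun x : ℝ => 5 + 3 * x ^ 2) (6 * ρ) ρ := by
  have h : HasDerivAt (fun x : ℝ => 5 + 3 * x ^ 2) (0 + 3 * (2 * ρ ^ 1)) ρ := by
    exact (hasDerivAt_const ρ 5).add (((hasDerivAt_pow 2 ρ)).const_mul 3)
  convert h using 1; ring

lemma hf1 (ρ : ℝ) : HasDerivAt f1 (-(12 * ρ) / (5 + 3 * ρ ^ 2) ^ 3) ρ := by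
  have h : HasDerivAt (fun x : ℝ => (5 + 3 * x ^ 2) ^ 2)
      (2 * (5 + 3 * ρ ^ 2) ^ 1 * (6 * ρ)) ρ := by
    simpa using (hbase ρ).fun_pow 2
  have h2 := h.fun_inv (by positivity)
  convert! h2 using 1
  field_simp
  ring

lemma d1 : deriv f1 = fun ρ => -(12 * ρ) / (5 + 3 * ρ ^ 2) ^ 3 :=
  funext fun ρ => (hf1 ρ).deriv

lemma f2eq : f2 = fun ρ => (10 - 6 * ρ ^ 2) / (5 + 3 * ρ ^ 2) ^ 3 := by
  funext ρ
  unfold f2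
  rw [d1]
  unfold f1
  have := hne ρ
  field_simp
  ring

lemma hd1' (ρ : ℝ) : HasDerivAt (fun x : ℝ => -(12 * x) / (5 + 3 * x ^ 2) ^ 3)
    ((180 * ρ ^ 2 - 60) / (5 + 3 * ρ ^ 2) ^ 4) ρ := by
  have hnum : HasDerivAt (fun x : ℝ => -(12 * x)) (-12) ρ := by
    simpa using ((hasDerivAt_id ρ).const_mul (12:ℝ)).fun_neg
  have hden : HasDerivAt (fun x : ℝ => (5 + 3 * x ^ 2) ^ 3)
      (3 * (5 + 3 * ρ ^ 2) ^ 2 * (6 * ρ)) ρ := by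
    simpa using (hbase ρ).fun_pow 3
  have h := hnum.fun_div hden (by positivity)
  convert! h using 1
  have := hne ρ
  field_simp
  ring

lemma hd2' (ρ : ℝ) : HasDerivAt (fun x : ℝ => (10 - 6 * x ^ 2) / (5 + 3 * x ^ 2) ^ 3)
    ((72 * ρ ^ 3 - 240 * ρ) / (5 + 3 * ρ ^ 2) ^ 4) ρ := by
  have hnum : HasDerivAt (fun x : ℝ => 10 - 6 * x ^ 2) (-(12 * ρ)) ρ := by
    have h := (hasDerivAt_const ρ (10:ℝ)).fun_sub (((hasDerivAt_pow 2 ρ)).const_mul 6)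
    convert! h using 1; simp; ring
  have hden : HasDerivAt (fun x : ℝ => (5 + 3 * x ^ 2) ^ 3)
      (3 * (5 + 3 * ρ ^ 2) ^ 2 * (6 * ρ)) ρ := by
    simpa using (hbase ρ).fun_pow 3
  have h := hnum.fun_div hden (by positivity)
  convert! h using 1
  have := hne ρ
  field_simp
  ring

/-- The pair `(f₁, f₂)` solves the radial eigenvalue system with `λ = 1` on
`(0,1)`. -/
theorem stmt_11 :
    (∀ ρ ∈ Set.Ioo (0 : ℝ) 1, ρ * deriv f1 ρ + 2 * f1 ρ - f2 ρ = 0) ∧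
    (∀ ρ ∈ Set.Ioo (0 : ℝ) 1,
      -deriv (deriv f1) ρ - 6 / ρ * deriv f1 ρ + ρ * deriv f2 ρ
        + 5 * f2 ρ - Vt ρ * f1 ρ = 0) := by
  constructor
  · intro ρ _
    unfold f2
    ring
  · intro ρ hρ
    have hρ0 : ρ ≠ 0 := ne_of_gt hρ.1
    have hne' := hne ρ
    rw [d1, f2eq]
    rw [(hd1' ρ).deriv, (hd2' ρ).deriv]
    unfold Vt f1
    field_simp
    ring
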